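/- For 0 ≤ s ≤ t and u ∈ ℝ³ let b_t(s,u) = ∫₀^{t−s} (4πr)^{-3/2} e^{-‖u‖²/(4r)} dr. Then for any 0 ≤ s ≤ t₁ ≤ t₂, ∫_{ℝ³} b_{t₁}(s,u) b_{t₂}(s,u) du = ∫₀^{t₁−s} ∫₀^{t₂−s} (4π(r₁+r₂))^{-3/2} dr₁ dr₂ (both sides being finite). -/

import Mathlib

open Real MeasureTheory Set

/-- `b_t(s,u) = ∫₀^{t-s} (4πr)^{-3/2} e^{-‖u‖²/(4r)} dr` (equal to `0` when `s > t`). -/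
noncomputable def bker (t s : ℝ) (u : EuclideanSpace ℝ (Fin 3)) : ℝ :=
  ∫ r in Set.Ioc (0 : ℝ) (t - s), (4 * π * r) ^ (-(3 : ℝ) / 2) * Real.exp (-‖u‖ ^ 2 / (4 * r))

noncomputable def hk (r : ℝ) (u : EuclideanSpace ℝ (Fin 3)) : ℝ :=
  (4 * π * r) ^ (-(3 : ℝ) / 2) * Real.exp (-‖u‖ ^ 2 / (4 * r))

lemma hk_nonneg {r : ℝ} (hr : 0 ≤ r) (u : EuclideanSpace ℝ (Fin 3)) : 0 ≤ hk r u := by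
  apply mul_nonneg (Real.rpow_nonneg (by positivity) _) (Real.exp_pos _).le

lemma hk_measurable : Measurable (fun p : ℝ × EuclideanSpace ℝ (Fin 3) => hk p.1 p.2) := by
  apply Measurable.mul
  · exact (measurable_fst.const_mul _).pow measurable_const
  · exact ((((measurable_norm.comp measurable_snd).pow measurable_const).neg).div
      (measurable_fst.const_mul 4)).exp

lemma exp_neg_le {x : ℝ} (hx : 0 < x) : rexp (-x) ≤ 4 / x ^ 2 := by
  have h1 : x ^ 2 / 4 ≤ rexp x := by
    have h0 : rexp x = rexp (x / 2) ^ 2 := by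
      rw [sq, ← Real.exp_add]; ring_nf
    rw [h0]
    have h2 : x / 2 ≤ rexp (x / 2) := (add_one_le_exp _).trans' (by linarith)
    calc x ^ 2 / 4 = (x / 2) ^ 2 := by ring
    _ ≤ rexp (x / 2) ^ 2 := by
      apply pow_le_pow_left₀ (by positivity) h2
  rw [Real.exp_neg]
  rw [show (4 : ℝ) / x ^ 2 = (x ^ 2 / 4)⁻¹ by field_simp]
  exact inv_anti₀ (by positivity) h1

lemma gauss_int {b : ℝ} (hb : 0 < b) :
    Integrable (fun u : EuclideanSpace ℝ (Fin 3) => rexp (-b * ‖u‖ ^ 2)) ∧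
    ∫ u : EuclideanSpace ℝ (Fin 3), rexp (-b * ‖u‖ ^ 2) = (π / b) ^ ((3 : ℝ) / 2) := by
  constructor
  · have h := (GaussianFourier.integrable_cexp_neg_mul_sq_norm_add
      (V := EuclideanSpace ℝ (Fin 3)) (b := (b : ℂ)) (by simpa) 0 0).norm
    refine h.congr (Filter.Eventually.of_forall fun u => ?_)
    simp only [Complex.norm_exp]
    norm_num
    left
    norm_cast
  · have h := GaussianFourier.integral_rexp_neg_mul_sq_norm
      (V := EuclideanSpace ℝ (Fin 3)) hb
    rw [finrank_euclideanSpace_fin] at h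
    norm_num at h
    rw [← h]
    simp [neg_mul]

lemma hk_mul_eq {r₁ r₂ : ℝ} (h1 : 0 < r₁) (h2 : 0 < r₂) :
    (fun u : EuclideanSpace ℝ (Fin 3) => hk r₁ u * hk r₂ u)
      = fun u => ((4 * π * r₁) ^ (-(3 : ℝ) / 2) * (4 * π * r₂) ^ (-(3 : ℝ) / 2)) *
          rexp (-((r₁ + r₂) / (4 * r₁ * r₂)) * ‖u‖ ^ 2) := by
  funext u
  unfold hk
  rw [mul_mul_mul_comm, ← Real.exp_add]
  congr 1
  field_simp
  ring

lemma hk_mul_integrable {r₁ r₂ : ℝ} (h1 : 0 < r₁) (h2 : 0 < r₂) :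
    Integrable (fun u : EuclideanSpace ℝ (Fin 3) => hk r₁ u * hk r₂ u) := by
  have hb : 0 < (r₁ + r₂) / (4 * r₁ * r₂) := by positivity
  rw [hk_mul_eq h1 h2]
  exact (gauss_int hb).1.const_mul _

lemma hk_mul_integral {r₁ r₂ : ℝ} (h1 : 0 < r₁) (h2 : 0 < r₂) :
    ∫ u : EuclideanSpace ℝ (Fin 3), hk r₁ u * hk r₂ u
      = (4 * π * (r₁ + r₂)) ^ (-(3 : ℝ) / 2) := by
  have hb : 0 < (r₁ + r₂) / (4 * r₁ * r₂) := by positivity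
  rw [hk_mul_eq h1 h2, integral_const_mul, (gauss_int hb).2]
  have hπ := pi_pos
  have e1 : (0:ℝ) ≤ 4 * π * r₁ := by positivity
  have e2 : (0:ℝ) ≤ 4 * π * r₂ := by positivity
  have e3 : (0:ℝ) ≤ 4 * π * (r₁ + r₂) := by positivity
  rw [neg_div, Real.rpow_neg e1, Real.rpow_neg e2, Real.rpow_neg e3,
      ← Real.inv_rpow e1, ← Real.inv_rpow e2, ← Real.inv_rpow e3,
      ← Real.mul_rpow (by positivity) (by positivity),
      ← Real.mul_rpow (by positivity) (by positivity)]
  congr 1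
  field_simp

lemma hk_integrableOn (T : ℝ) {u : EuclideanSpace ℝ (Fin 3)} (hu : u ≠ 0) :
    IntegrableOn (fun r => hk r u) (Ioc 0 T) := by
  rcases le_or_gt T 0 with hT | hT
  · rw [Set.Ioc_eq_empty (by exact fun h => absurd (h.trans_le hT) (lt_irrefl 0))]
    exact integrableOn_empty
  have hc : (0:ℝ) < ‖u‖ ^ 2 := by
    have : ‖u‖ ≠ 0 := norm_ne_zero_iff.mpr hu
    positivity
  apply Integrable.mono'
    (g := fun r => ((4 * π) ^ (-(3:ℝ)/2) * (64 / ‖u‖ ^ 4)) * r ^ ((1:ℝ)/2))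
  · have h := intervalIntegral.intervalIntegrable_rpow'
      (a := 0) (b := T) (show (-1:ℝ) < 1/2 by norm_num)
    exact ((intervalIntegrable_iff_integrableOn_Ioc_of_le hT.le).1 h).const_mul _
  · exact ((hk_measurable.comp (measurable_id.prodMk measurable_const))).aestronglyMeasurable
  · filter_upwards [ae_restrict_mem measurableSet_Ioc] with r hr
    have hr0 : 0 < r := hr.1
    rw [Real.norm_eq_abs, abs_of_nonneg (hk_nonneg hr0.le u)]
    unfold hk
    have hx : 0 < ‖u‖ ^ 2 / (4 * r) := by positivity
    have hexp : rexp (-‖u‖ ^ 2 / (4 * r)) ≤ 64 * r ^ 2 / ‖u‖ ^ 4 := by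
      rw [neg_div]
      refine (exp_neg_le hx).trans_eq ?_
      rw [div_pow]
      have h4 : ((‖u‖:ℝ) ^ 2) ^ 2 ≠ 0 := by positivity
      have h5 : ((4:ℝ) * r) ^ 2 ≠ 0 := by positivity
      have h6 : (‖u‖:ℝ) ≠ 0 := norm_ne_zero_iff.mpr hu
      field_simp
      ring
    calc (4 * π * r) ^ (-(3:ℝ)/2) * rexp (-‖u‖ ^ 2 / (4 * r))
        ≤ (4 * π * r) ^ (-(3:ℝ)/2) * (64 * r ^ 2 / ‖u‖ ^ 4) :=
          mul_le_mul_of_nonneg_left hexp (Real.rpow_nonneg (by positivity) _)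
      _ = ((4 * π) ^ (-(3:ℝ)/2) * (64 / ‖u‖ ^ 4)) * r ^ ((1:ℝ)/2) := by
          rw [Real.mul_rpow (by positivity) hr0.le]
          have h2 : r ^ (-(3:ℝ)/2) * r ^ (2:ℕ) = r ^ ((1:ℝ)/2) := by
            rw [← Real.rpow_natCast r 2, ← Real.rpow_add hr0]
            norm_num
          rw [← h2]
          ring

lemma bker_eq (t s : ℝ) (u : EuclideanSpace ℝ (Fin 3)) :
    bker t s u = ∫ r in Ioc (0:ℝ) (t - s), hk r u := rfl

lemma bker_nonneg (t s : ℝ) (u : EuclideanSpace ℝ (Fin 3)) : 0 ≤ bker t s u :=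
  setIntegral_nonneg measurableSet_Ioc fun r hr => hk_nonneg hr.1.le u

lemma ofReal_bker {t s : ℝ} {u : EuclideanSpace ℝ (Fin 3)} (hu : u ≠ 0) :
    ENNReal.ofReal (bker t s u) = ∫⁻ r in Ioc (0:ℝ) (t - s), ENNReal.ofReal (hk r u) := by
  rw [bker_eq, ofReal_integral_eq_lintegral_ofReal (hk_integrableOn _ hu)]
  exact (ae_restrict_iff' measurableSet_Ioc).2 (Filter.Eventually.of_forall
    fun r hr => hk_nonneg hr.1.le u)

lemma lint_hk_mul {r₁ r₂ : ℝ} (h1 : 0 < r₁) (h2 : 0 < r₂) :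
    ∫⁻ u : EuclideanSpace ℝ (Fin 3),
        ENNReal.ofReal (hk r₁ u) * ENNReal.ofReal (hk r₂ u)
      = ENNReal.ofReal ((4 * π * (r₁ + r₂)) ^ (-(3:ℝ)/2)) := by
  have h : ∀ u : EuclideanSpace ℝ (Fin 3), ENNReal.ofReal (hk r₁ u) * ENNReal.ofReal (hk r₂ u)
      = ENNReal.ofReal (hk r₁ u * hk r₂ u) :=
    fun u => (ENNReal.ofReal_mul (hk_nonneg h1.le u)).symm
  simp_rw [h]
  rw [← ofReal_integral_eq_lintegral_ofReal (hk_mul_integrable h1 h2)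
    (Filter.Eventually.of_forall fun u => mul_nonneg (hk_nonneg h1.le u) (hk_nonneg h2.le u)),
    hk_mul_integral h1 h2]

lemma phi_integrableOn {r₁ : ℝ} (T : ℝ) (h1 : 0 < r₁) :
    IntegrableOn (fun r₂ => (4 * π * (r₁ + r₂)) ^ (-(3:ℝ)/2)) (Ioc 0 T) := by
  rcases le_or_gt T 0 with hT | hT
  · rw [Set.Ioc_eq_empty (by exact fun h => absurd (h.trans_le hT) (lt_irrefl 0))]
    exact integrableOn_empty
  have hcont : ContinuousOn (fun r₂ : ℝ => (4 * π * (r₁ + r₂)) ^ (-(3:ℝ)/2)) (Icc 0 T) := by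
    apply ContinuousOn.rpow_const
    · fun_prop
    · intro x hx
      left
      have := hx.1
      positivity
  exact (hcont.integrableOn_compact isCompact_Icc).mono_set Ioc_subset_Icc_self

lemma phi_int_le {r₁ : ℝ} (T : ℝ) (h1 : 0 < r₁) (hT : 0 ≤ T) :
    ∫ r₂ in Ioc (0:ℝ) T, (4 * π * (r₁ + r₂)) ^ (-(3:ℝ)/2)
      ≤ (4 * π) ^ (-(3:ℝ)/2) * (2 * r₁ ^ (-(1:ℝ)/2)) := by
  have hsplit : EqOn (fun r₂ : ℝ => (4 * π * (r₁ + r₂)) ^ (-(3:ℝ)/2))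
      (fun r₂ : ℝ => (4 * π) ^ (-(3:ℝ)/2) * (r₁ + r₂) ^ (-(3:ℝ)/2)) (Ioc 0 T) := by
    intro r₂ hr
    have h2 := hr.1
    exact Real.mul_rpow (by positivity) (by positivity)
  rw [setIntegral_congr_fun measurableSet_Ioc hsplit, integral_const_mul]
  apply mul_le_mul_of_nonneg_left _ (Real.rpow_nonneg (by positivity) _)
  have trans : ∫ r₂ in Ioc (0:ℝ) T, (r₁ + r₂) ^ (-(3:ℝ)/2)
      = ∫ y in Ioc r₁ (r₁ + T), y ^ (-(3:ℝ)/2) := by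
    rw [← intervalIntegral.integral_of_le hT, ← intervalIntegral.integral_of_le (by linarith)]
    simp_rw [add_comm r₁]
    rw [intervalIntegral.integral_comp_add_right (fun y => y ^ (-(3:ℝ)/2)) r₁]
    norm_num [add_comm]
  rw [trans]
  have hIoi : IntegrableOn (fun y : ℝ => y ^ (-(3:ℝ)/2)) (Ioi r₁) := by
    have := integrableOn_Ioi_rpow_of_lt (show (-(3:ℝ)/2) < -1 by norm_num) h1
    exact this
  calc ∫ y in Ioc r₁ (r₁ + T), y ^ (-(3:ℝ)/2)
      ≤ ∫ y in Ioi r₁, y ^ (-(3:ℝ)/2) := by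
        apply setIntegral_mono_set hIoi
        · exact (ae_restrict_iff' measurableSet_Ioi).2 (Filter.Eventually.of_forall
            fun y hy => Real.rpow_nonneg ((h1.trans hy).le) _)
        · exact (Set.Ioc_subset_Ioi_self).eventuallyLE
    _ = 2 * r₁ ^ (-(1:ℝ)/2) := by
        rw [integral_Ioi_rpow_of_lt (by norm_num) h1]
        rw [show (-(3:ℝ)/2 + 1) = -(1:ℝ)/2 by norm_num]
        ring

/-- For `0 ≤ s ≤ t₁ ≤ t₂`,
`∫_{ℝ³} b_{t₁}(s,u) b_{t₂}(s,u) du = ∫₀^{t₁-s} ∫₀^{t₂-s} (4π(r₁+r₂))^{-3/2} dr₁ dr₂`,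
both sides being finite. -/
theorem bker_product_integral (s t₁ t₂ : ℝ) (hs : 0 ≤ s) (h₁ : s ≤ t₁) (h₂ : t₁ ≤ t₂) :
    Integrable (fun u : EuclideanSpace ℝ (Fin 3) => bker t₁ s u * bker t₂ s u) ∧
    IntegrableOn
      (fun r₁ : ℝ => ∫ r₂ in Set.Ioc (0 : ℝ) (t₂ - s), (4 * π * (r₁ + r₂)) ^ (-(3 : ℝ) / 2))
      (Set.Ioc (0 : ℝ) (t₁ - s)) ∧
    (∫ u : EuclideanSpace ℝ (Fin 3), bker t₁ s u * bker t₂ s u)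
      = ∫ r₁ in Set.Ioc (0 : ℝ) (t₁ - s), ∫ r₂ in Set.Ioc (0 : ℝ) (t₂ - s),
          (4 * π * (r₁ + r₂)) ^ (-(3 : ℝ) / 2) := by
  have hT₁ : (0:ℝ) ≤ t₁ - s := by linarith
  have hT₂ : (0:ℝ) ≤ t₂ - s := by linarith
  set h : ℝ → ℝ :=
    fun r₁ => ∫ r₂ in Set.Ioc (0 : ℝ) (t₂ - s), (4 * π * (r₁ + r₂)) ^ (-(3 : ℝ) / 2) with hdef
  -- measurability facts
  have mφ : Measurable (fun p : ℝ × ℝ => (4 * π * (p.1 + p.2)) ^ (-(3:ℝ)/2)) :=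
    ((measurable_fst.add measurable_snd).const_mul _).pow measurable_const
  have h_sm : StronglyMeasurable h := by
    rw [hdef]
    exact (mφ.stronglyMeasurable (β := ℝ)).integral_prod_right
      (f := fun r₁ r₂ => (4 * π * (r₁ + r₂)) ^ (-(3:ℝ)/2))
  have h_nonneg : ∀ r₁ ∈ Set.Ioc (0:ℝ) (t₁ - s), 0 ≤ h r₁ := by
    intro r₁ hr₁
    have h0 : 0 < r₁ := hr₁.1
    apply setIntegral_nonneg measurableSet_Ioc
    intro r₂ hr₂
    have := hr₂.1
    exact Real.rpow_nonneg (by positivity) _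
  -- GOAL 2
  have hint2 : IntegrableOn h (Set.Ioc (0:ℝ) (t₁ - s)) := by
    apply Integrable.mono' (g := fun r₁ => ((4 * π) ^ (-(3:ℝ)/2) * 2) * r₁ ^ (-(1:ℝ)/2))
    · have hb := intervalIntegral.intervalIntegrable_rpow'
        (a := 0) (b := t₁ - s) (show (-1:ℝ) < -(1:ℝ)/2 by norm_num)
      exact ((intervalIntegrable_iff_integrableOn_Ioc_of_le hT₁).1 hb).const_mul _
    · exact h_sm.aestronglyMeasurable
    · filter_upwards [ae_restrict_mem measurableSet_Ioc] with r₁ hr₁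
      rw [Real.norm_eq_abs, abs_of_nonneg (h_nonneg r₁ hr₁)]
      have := phi_int_le (t₂ - s) hr₁.1 hT₂
      calc h r₁ ≤ (4 * π) ^ (-(3:ℝ)/2) * (2 * r₁ ^ (-(1:ℝ)/2)) := this
        _ = ((4 * π) ^ (-(3:ℝ)/2) * 2) * r₁ ^ (-(1:ℝ)/2) := by ring
  -- the key lintegral identity
  have mG1 : ∀ u : EuclideanSpace ℝ (Fin 3),
      Measurable fun r : ℝ => ENNReal.ofReal (hk r u) := fun u =>
    ENNReal.measurable_ofReal.comp (hk_measurable.comp (measurable_id.prodMk measurable_const))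
  have key : (∫⁻ u : EuclideanSpace ℝ (Fin 3), ENNReal.ofReal (bker t₁ s u * bker t₂ s u))
      = ENNReal.ofReal (∫ r₁ in Set.Ioc (0:ℝ) (t₁ - s), h r₁) := by
    have h0 : ∀ᵐ (u : EuclideanSpace ℝ (Fin 3)), u ≠ 0 := by
      simp [ae_iff, measure_singleton]
    calc ∫⁻ u : EuclideanSpace ℝ (Fin 3), ENNReal.ofReal (bker t₁ s u * bker t₂ s u)
        = ∫⁻ u : EuclideanSpace ℝ (Fin 3),
            (∫⁻ r₁ in Set.Ioc (0:ℝ) (t₁ - s), ENNReal.ofReal (hk r₁ u)) *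
            (∫⁻ r₂ in Set.Ioc (0:ℝ) (t₂ - s), ENNReal.ofReal (hk r₂ u)) := by
          apply lintegral_congr_ae
          filter_upwards [h0] with u hu
          rw [ENNReal.ofReal_mul (bker_nonneg t₁ s u), ofReal_bker hu, ofReal_bker hu]
      _ = ∫⁻ u : EuclideanSpace ℝ (Fin 3), ∫⁻ r₁ in Set.Ioc (0:ℝ) (t₁ - s),
            ∫⁻ r₂ in Set.Ioc (0:ℝ) (t₂ - s),
              ENNReal.ofReal (hk r₁ u) * ENNReal.ofReal (hk r₂ u) := by
          apply lintegral_congr fun u => ?_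
          rw [← lintegral_mul_const'' _ ((mG1 u).aemeasurable)]
          exact lintegral_congr fun r₁ =>
            (lintegral_const_mul'' _ ((mG1 u).aemeasurable)).symm
      _ = ∫⁻ r₁ in Set.Ioc (0:ℝ) (t₁ - s), ∫⁻ u : EuclideanSpace ℝ (Fin 3),
            ∫⁻ r₂ in Set.Ioc (0:ℝ) (t₂ - s),
              ENNReal.ofReal (hk r₁ u) * ENNReal.ofReal (hk r₂ u) := by
          apply lintegral_lintegral_swap
          apply Measurable.aemeasurable
          apply Measurable.lintegral_prod_right'
            (f := fun q : (EuclideanSpace ℝ (Fin 3) × ℝ) × ℝ =>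
              ENNReal.ofReal (hk q.1.2 q.1.1) * ENNReal.ofReal (hk q.2 q.1.1))
          apply Measurable.fun_mul
          · exact ENNReal.measurable_ofReal.comp (hk_measurable.comp
              ((measurable_fst.snd).prodMk (measurable_fst.fst)))
          · exact ENNReal.measurable_ofReal.comp (hk_measurable.comp
              ((measurable_snd).prodMk (measurable_fst.fst)))
      _ = ∫⁻ r₁ in Set.Ioc (0:ℝ) (t₁ - s), ∫⁻ r₂ in Set.Ioc (0:ℝ) (t₂ - s),
            ∫⁻ u : EuclideanSpace ℝ (Fin 3),
              ENNReal.ofReal (hk r₁ u) * ENNReal.ofReal (hk r₂ u) := by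
          apply lintegral_congr fun r₁ => ?_
          apply lintegral_lintegral_swap
          apply Measurable.aemeasurable
          apply Measurable.fun_mul
          · exact ENNReal.measurable_ofReal.comp (hk_measurable.comp
              (measurable_const.prodMk measurable_fst))
          · exact ENNReal.measurable_ofReal.comp (hk_measurable.comp
              ((measurable_snd).prodMk measurable_fst))
      _ = ∫⁻ r₁ in Set.Ioc (0:ℝ) (t₁ - s), ENNReal.ofReal (h r₁) := by
          apply setLIntegral_congr_fun measurableSet_Ioc
          intro r₁ hr₁
          have e1 : ∫⁻ r₂ in Set.Ioc (0:ℝ) (t₂ - s), ∫⁻ u : EuclideanSpace ℝ (Fin 3),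
                ENNReal.ofReal (hk r₁ u) * ENNReal.ofReal (hk r₂ u)
              = ∫⁻ r₂ in Set.Ioc (0:ℝ) (t₂ - s),
                  ENNReal.ofReal ((4 * π * (r₁ + r₂)) ^ (-(3:ℝ)/2)) := by
            apply setLIntegral_congr_fun measurableSet_Ioc
            intro r₂ hr₂
            exact lint_hk_mul hr₁.1 hr₂.1
          beta_reduce
          rw [e1, hdef]
          rw [← ofReal_integral_eq_lintegral_ofReal (phi_integrableOn _ hr₁.1)]
          apply (ae_restrict_iff' measurableSet_Ioc).2
          apply Filter.Eventually.of_forall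
          intro r₂ hr₂
          have ha := hr₁.1
          have hb := hr₂.1
          exact Real.rpow_nonneg (by positivity) _
      _ = ENNReal.ofReal (∫ r₁ in Set.Ioc (0:ℝ) (t₁ - s), h r₁) := by
          rw [← ofReal_integral_eq_lintegral_ofReal hint2]
          exact (ae_restrict_iff' measurableSet_Ioc).2
            (Filter.Eventually.of_forall h_nonneg)
  -- GOAL 1
  have prod_nonneg : ∀ u : EuclideanSpace ℝ (Fin 3), 0 ≤ bker t₁ s u * bker t₂ s u :=
    fun u => mul_nonneg (bker_nonneg t₁ s u) (bker_nonneg t₂ s u)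
  have bker_sm : ∀ t : ℝ, StronglyMeasurable (bker t s) := by
    intro t
    have : bker t s = fun u => ∫ r in Set.Ioc (0:ℝ) (t - s), hk r u := rfl
    rw [this]
    exact ((hk_measurable.comp measurable_swap).stronglyMeasurable).integral_prod_right
      (f := fun u r => hk r u)
  have hint1 : Integrable (fun u : EuclideanSpace ℝ (Fin 3) => bker t₁ s u * bker t₂ s u) := by
    refine ⟨((bker_sm t₁).mul (bker_sm t₂)).aestronglyMeasurable, ?_⟩
    rw [hasFiniteIntegral_iff_norm]
    have heq : ∀ u : EuclideanSpace ℝ (Fin 3), ENNReal.ofReal ‖bker t₁ s u * bker t₂ s u‖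
        = ENNReal.ofReal (bker t₁ s u * bker t₂ s u) := fun u => by
      rw [Real.norm_eq_abs, abs_of_nonneg (prod_nonneg u)]
    simp_rw [heq, key]
    exact ENNReal.ofReal_lt_top
  refine ⟨hint1, hint2, ?_⟩
  -- GOAL 3
  have e2 : ENNReal.ofReal (∫ u : EuclideanSpace ℝ (Fin 3), bker t₁ s u * bker t₂ s u)
      = ENNReal.ofReal (∫ r₁ in Set.Ioc (0:ℝ) (t₁ - s), h r₁) := by
    rw [ofReal_integral_eq_lintegral_ofReal hint1 (Filter.Eventually.of_forall prod_nonneg), key]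
  have l1 : 0 ≤ ∫ u : EuclideanSpace ℝ (Fin 3), bker t₁ s u * bker t₂ s u :=
    integral_nonneg prod_nonneg
  have l2 : 0 ≤ ∫ r₁ in Set.Ioc (0:ℝ) (t₁ - s), h r₁ :=
    setIntegral_nonneg measurableSet_Ioc h_nonneg
  exact (ENNReal.ofReal_eq_ofReal_iff l1 l2).1 e2
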